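/- Let M ≥ 1 and 1 ≤ ℓ ≤ M. For a uniformly random function f : {1,…,M} → {1,…,M}, the probability that the functional graph of f is connected and f has exactly ℓ periodic points equals Π₁(ℓ,M) = M! / ((M−ℓ)! · M^{ℓ+1}). -/

import Mathlib

set_option linter.unusedSectionVars false

open Function Set

namespace Stmt3Aux

section GeneralDynamics

variable {α : Type*}

/-- In a finite type, every forward orbit reaches a periodic point. -/
lemma exists_iterate_mem_periodicPts [Finite α] (f : α → α) (x : α) :
    ∃ n, f^[n] x ∈ periodicPts f := by
  obtain ⟨a, b, hab, h⟩ := Finite.exists_ne_map_eq_of_infinite (fun n : ℕ => f^[n] x)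
  rcases Nat.lt_or_ge a b with hlt | hge
  · refine ⟨a, Function.mk_mem_periodicPts (n := b - a) (by omega) ?_⟩
    show f^[b-a] (f^[a] x) = f^[a] x
    rw [← Function.iterate_add_apply]
    have : b - a + a = b := by omega
    rw [this]; exact h.symm
  · have hlt : b < a := lt_of_le_of_ne hge (Ne.symm hab)
    refine ⟨b, Function.mk_mem_periodicPts (n := a - b) (by omega) ?_⟩
    show f^[a-b] (f^[b] x) = f^[b] x
    rw [← Function.iterate_add_apply]
    have : a - b + b = a := by omega
    rw [this]; exact h

/-- Absorbing lemma: a periodic point whose orbit meets an invariant set lies in it. -/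
lemma mem_of_periodicPt_of_eventually {f : α → α} {A : Set α}
    (hA : ∀ y ∈ A, f y ∈ A) {x : α} (hx : x ∈ periodicPts f)
    {m : ℕ} (hm : f^[m] x ∈ A) : x ∈ A := by
  have key : ∀ a, f^[m + a] x ∈ A := by
    intro a
    induction a with
    | zero => simpa using hm
    | succ a ih =>
        have : m + (a + 1) = (m + a) + 1 := by omega
        rw [this, Function.iterate_succ_apply']
        exact hA _ ih
  obtain ⟨n, hn, hper⟩ := hx
  have hper' : Function.IsPeriodicPt f (n * (m + 1)) x := hper.mul_const (m + 1)
  have hge : m ≤ n * (m + 1) := by nlinarith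
  have := key (n * (m + 1) - m)
  rw [show m + (n * (m+1) - m) = n * (m+1) by omega] at this
  rwa [hper'] at this

/-- Cancelling iterates using injectivity on an invariant set. -/
lemma mem_periodicPts_of_invariant_injOn [Finite α] {f : α → α} {s : Set α}
    (hmaps : Set.MapsTo f s s) (hinj : Set.InjOn f s) {x : α} (hx : x ∈ s) :
    x ∈ periodicPts f := by
  have horb : ∀ n, f^[n] x ∈ s := by
    intro n; induction n with
    | zero => simpa using hx
    | succ n ih => rw [Function.iterate_succ_apply']; exact hmaps ih
  obtain ⟨a, b, hab, h⟩ := Finite.exists_ne_map_eq_of_infinite (fun n : ℕ => f^[n] x)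
  -- wlog a < b
  have main : ∀ a b : ℕ, a < b → f^[a] x = f^[b] x → x ∈ periodicPts f := by
    intro a b hlt heq
    -- cancel a times
    have cancel : ∀ c : ℕ, f^[c] x = f^[c + (b - a)] x → x = f^[b - a] x := by
      intro c
      induction c with
      | zero => intro h0; simpa using h0
      | succ c ih =>
          intro hc
          apply ih
          have h1 : f (f^[c] x) = f (f^[c + (b-a)] x) := by
            rw [show c + 1 + (b-a) = c + (b-a) + 1 by omega] at hc
            rw [← Function.iterate_succ_apply' f c x,
              ← Function.iterate_succ_apply' f (c + (b-a)) x]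
            exact hc
          exact hinj (horb c) (horb (c + (b-a))) h1
    have hx' : x = f^[b-a] x := by
      apply cancel a
      rw [show a + (b - a) = b by omega]
      exact heq
    exact Function.mk_mem_periodicPts (by omega) hx'.symm
  rcases Nat.lt_or_ge a b with hlt | hge
  · exact main a b hlt h
  · exact main b a (lt_of_le_of_ne hge (Ne.symm hab)) h.symm

/-- Iterates of a map fixing every point of a set fix those points. -/
lemma iterate_fixed {f : α → α} {x : α} (h : f x = x) (m : ℕ) : f^[m] x = x := by
  induction m with
  | zero => rfl
  | succ m ih => rw [Function.iterate_succ_apply', ih, h]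

/-- For a connected map, the periodic points are the orbit of any one of them. -/
lemma periodicPts_eq_orbit {f : α → α}
    (hconn : ∀ x y : α, ∃ m n : ℕ, f^[m] x = f^[n] y) {z : α}
    (hz : z ∈ periodicPts f) :
    periodicPts f = (fun i => f^[i] z) '' (Set.Iio (minimalPeriod f z)) := by
  have hp : 0 < minimalPeriod f z := Function.minimalPeriod_pos_of_mem_periodicPts hz
  ext y
  constructor
  · intro hy
    obtain ⟨m, n, hmn⟩ := hconn z y
    have hq : 0 < minimalPeriod f y := Function.minimalPeriod_pos_of_mem_periodicPts hy
    set q := minimalPeriod f y with hqdef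
    have hyq : Function.IsPeriodicPt f (q * n + q) y :=
      ((Function.isPeriodicPt_minimalPeriod f y).mul_const n).add
        (Function.isPeriodicPt_minimalPeriod f y)
    have h1 : y = f^[q * n + q - n] (f^[n] y) := by
      rw [← Function.iterate_add_apply, show q*n + q - n + n = q*n+q by have := Nat.le_mul_of_pos_left n hq; omega]
      exact hyq.symm
    have h2 : y = f^[q * n + q - n + m] z := by
      rw [Function.iterate_add_apply, hmn]; exact h1
    refine ⟨(q * n + q - n + m) % minimalPeriod f z, Nat.mod_lt _ hp, ?_⟩
    simp only
    rw [Function.iterate_mod_minimalPeriod_eq]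
    exact h2.symm
  · rintro ⟨i, _, rfl⟩
    obtain ⟨n, hn, hper⟩ := hz
    exact Function.mk_mem_periodicPts hn (hper.apply_iterate i)

end GeneralDynamics

section Main

variable {M ℓ : ℕ} [NeZero ℓ]

/-- Congruence for `orderIsoOfFin` along an equality of finsets. -/
lemma orderIsoOfFin_congr {β : Type*} [LinearOrder β] {s t : Finset β} (hst : s = t)
    {k k' : ℕ} (h : s.card = k) (h' : t.card = k') {i : Fin k} {i' : Fin k'}
    (hii : (i : ℕ) = (i' : ℕ)) :
    (s.orderIsoOfFin h i : β) = (t.orderIsoOfFin h' i' : β) := by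
  subst hst
  subst h
  have : k' = s.card := h'.symm
  subst this
  have : i = i' := Fin.ext hii
  subst this
  rfl

lemma orderIsoOfFin_symm_congr {β : Type*} [LinearOrder β] {s t : Finset β} (hst : s = t)
    {k k' : ℕ} (h : s.card = k) (h' : t.card = k') {x : β} (hx : x ∈ s) (hx' : x ∈ t) :
    (((s.orderIsoOfFin h).symm ⟨x, hx⟩ : Fin k) : ℕ) =
      (((t.orderIsoOfFin h').symm ⟨x, hx'⟩ : Fin k') : ℕ) := by
  subst hst
  subst h
  have : k' = s.card := h'.symm
  subst this
  rfl

open Classical in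
noncomputable def hitTime (f : Fin M → Fin M) (v : Fin M) : ℕ :=
  Nat.find (exists_iterate_mem_periodicPts f v)

open Classical in
lemma hitTime_spec (f : Fin M → Fin M) (v : Fin M) :
    f^[hitTime f v] v ∈ periodicPts f :=
  Nat.find_spec (exists_iterate_mem_periodicPts f v)

open Classical in
lemma hitTime_min (f : Fin M → Fin M) (v : Fin M) {a : ℕ} (h : a < hitTime f v) :
    f^[a] v ∉ periodicPts f :=
  Nat.find_min (exists_iterate_mem_periodicPts f v) h

noncomputable def zPt (f : Fin M → Fin M) (v : Fin M) : Fin M := f^[hitTime f v] v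

noncomputable def tailSet (f : Fin M → Fin M) (v : Fin M) : Finset (Fin M) :=
  (Finset.range (hitTime f v)).image (fun a => f^[a] v)

lemma tail_inj (f : Fin M → Fin M) (v : Fin M) {a b : ℕ}
    (ha : a < hitTime f v) (hb : b < hitTime f v) (hab : f^[a] v = f^[b] v) : a = b := by
  by_contra hne
  have main : ∀ a b : ℕ, a < b → b < hitTime f v → f^[a] v = f^[b] v → False := by
    intro a b hlt hbk heq
    apply hitTime_min f v (show a < hitTime f v by omega)
    refine Function.mk_mem_periodicPts (n := b - a) (by omega) ?_
    show f^[b-a] (f^[a] v) = f^[a] v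
    rw [← Function.iterate_add_apply, show b - a + a = b by omega]
    exact heq.symm
  rcases Nat.lt_or_ge a b with hlt | hge
  · exact main a b hlt hb hab
  · exact main b a (by omega) ha hab.symm

lemma card_tailSet (f : Fin M → Fin M) (v : Fin M) : (tailSet f v).card = hitTime f v := by
  rw [tailSet, Finset.card_image_of_injOn, Finset.card_range]
  intro a ha b hb hab
  simp only [Finset.mem_coe, Finset.mem_range] at ha hb
  exact tail_inj f v ha hb hab

lemma mem_tailSet {f : Fin M → Fin M} {v x : Fin M} :
    x ∈ tailSet f v ↔ ∃ a, a < hitTime f v ∧ f^[a] v = x := by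
  simp [tailSet]

lemma tailSet_not_periodic {f : Fin M → Fin M} {v x : Fin M} (hx : x ∈ tailSet f v) :
    x ∉ periodicPts f := by
  obtain ⟨a, ha, rfl⟩ := mem_tailSet.mp hx
  exact hitTime_min f v ha

noncomputable def phiJ (f : Fin M → Fin M) (v : Fin M) : Fin ℓ → Fin M :=
  fun i => f^[(i : ℕ)] (zPt f v)

open Classical in
noncomputable def phiG (f : Fin M → Fin M) (v : Fin M) : Fin M → Fin M := fun x =>
  if x ∈ periodicPts f then x
  else if hx : x ∈ tailSet f v then
    f^[((((tailSet f v).orderIsoOfFin (card_tailSet f v)).symm ⟨x, hx⟩ : Fin (hitTime f v)) : ℕ)] v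
  else f x

open Classical in
noncomputable def wSet (j : Fin ℓ → Fin M) (g : Fin M → Fin M) : Finset (Fin M) :=
  Finset.univ.filter (fun x => x ∈ periodicPts g ∧ x ∉ Set.range j)

noncomputable def wEnum (j : Fin ℓ → Fin M) (g : Fin M → Fin M) :
    Fin (wSet j g).card → Fin M :=
  fun i => ((wSet j g).orderIsoOfFin rfl i : Fin M)

noncomputable def tEnum (j : Fin ℓ → Fin M) (g : Fin M → Fin M) :
    Fin (wSet j g).card → Fin M :=
  fun i => g (wEnum j g i)

open Classical in
noncomputable def psiF (j : Fin ℓ → Fin M) (g : Fin M → Fin M) : Fin M → Fin M := fun x =>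
  if hx : ∃ i : Fin ℓ, j i = x then j (Classical.choose hx + 1)
  else if hx2 : ∃ i : Fin (wSet j g).card, tEnum j g i = x then
    if h3 : ((Classical.choose hx2 : Fin (wSet j g).card) : ℕ) + 1 < (wSet j g).card then
      tEnum j g ⟨((Classical.choose hx2 : Fin (wSet j g).card) : ℕ) + 1, h3⟩
    else j 0
  else g x

open Classical in
noncomputable def psiV (j : Fin ℓ → Fin M) (g : Fin M → Fin M) : Fin M :=
  if h : 0 < (wSet j g).card then tEnum j g ⟨0, h⟩ else j 0

section PsiLemmas

variable {j : Fin ℓ → Fin M} {g : Fin M → Fin M}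

lemma mem_wSet {x : Fin M} : x ∈ wSet j g ↔ x ∈ periodicPts g ∧ x ∉ Set.range j := by
  classical
  simp [wSet]

lemma wEnum_mem (i : Fin (wSet j g).card) : wEnum j g i ∈ wSet j g :=
  ((wSet j g).orderIsoOfFin rfl i).2

lemma wEnum_inj : Function.Injective (wEnum j g) := by
  intro a b h
  have := ((wSet j g).orderIsoOfFin rfl).injective (Subtype.ext h)
  exact this

lemma tEnum_mem (hg : ∀ i, g (j i) = j i) (i : Fin (wSet j g).card) :
    tEnum j g i ∈ wSet j g := by
  have hw := mem_wSet.mp (wEnum_mem (j := j) (g := g) i)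
  rw [mem_wSet]
  constructor
  · exact (Function.bijOn_periodicPts g).mapsTo hw.1
  · rintro ⟨a, ha⟩
    apply hw.2
    obtain ⟨n, hn, hper⟩ := hw.1
    have h1 : wEnum j g i = g^[n - 1] (g (wEnum j g i)) := by
      have hh : g^[n] (wEnum j g i) = wEnum j g i := hper
      rw [show n = (n-1) + 1 by omega, Function.iterate_succ_apply] at hh
      exact hh.symm
    rw [show g (wEnum j g i) = tEnum j g i from rfl, ← ha, iterate_fixed (hg a)] at h1
    exact ⟨a, h1.symm⟩

lemma tEnum_inj : Function.Injective (tEnum j g) := by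
  intro a b h
  have ha := (mem_wSet.mp (wEnum_mem (j := j) (g := g) a)).1
  have hb := (mem_wSet.mp (wEnum_mem (j := j) (g := g) b)).1
  exact wEnum_inj ((Function.bijOn_periodicPts g).injOn ha hb h)

lemma tEnum_surj (hg : ∀ i, g (j i) = j i) {x : Fin M} (hx : x ∈ wSet j g) :
    ∃ i, tEnum j g i = x := by
  classical
  have hsub : Finset.univ.image (tEnum j g) ⊆ wSet j g := by
    intro y hy
    obtain ⟨i, _, rfl⟩ := Finset.mem_image.mp hy
    exact tEnum_mem hg i
  have hcard : (wSet j g).card ≤ (Finset.univ.image (tEnum j g)).card := by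
    rw [Finset.card_image_of_injective _ tEnum_inj, Finset.card_univ, Fintype.card_fin]
  have := Finset.eq_of_subset_of_card_le hsub hcard
  rw [← this] at hx
  obtain ⟨i, _, hi⟩ := Finset.mem_image.mp hx
  exact ⟨i, hi⟩

lemma psiF_j (hj : Function.Injective j) (i : Fin ℓ) : psiF j g (j i) = j (i + 1) := by
  have hx : ∃ a : Fin ℓ, j a = j i := ⟨i, rfl⟩
  rw [psiF, dif_pos hx]
  congr 1
  have := Classical.choose_spec hx
  have : Classical.choose hx = i := hj this
  rw [this]

lemma psiF_t (hg : ∀ i, g (j i) = j i)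
    (i : Fin (wSet j g).card) (h3 : (i : ℕ) + 1 < (wSet j g).card) :
    psiF j g (tEnum j g i) = tEnum j g ⟨(i : ℕ) + 1, h3⟩ := by
  have hnr : ¬ ∃ a : Fin ℓ, j a = tEnum j g i := by
    rintro ⟨a, ha⟩
    exact (mem_wSet.mp (tEnum_mem hg i)).2 ⟨a, ha⟩
  have hx2 : ∃ a : Fin (wSet j g).card, tEnum j g a = tEnum j g i := ⟨i, rfl⟩
  rw [psiF, dif_neg hnr, dif_pos hx2]
  have hch : Classical.choose hx2 = i := tEnum_inj (Classical.choose_spec hx2)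
  rw [dif_pos (by rw [hch]; exact h3)]
  congr 1
  simp [hch]

lemma psiF_t_last (hg : ∀ i, g (j i) = j i)
    (i : Fin (wSet j g).card) (h3 : ¬ ((i : ℕ) + 1 < (wSet j g).card)) :
    psiF j g (tEnum j g i) = j 0 := by
  have hnr : ¬ ∃ a : Fin ℓ, j a = tEnum j g i := by
    rintro ⟨a, ha⟩
    exact (mem_wSet.mp (tEnum_mem hg i)).2 ⟨a, ha⟩
  have hx2 : ∃ a : Fin (wSet j g).card, tEnum j g a = tEnum j g i := ⟨i, rfl⟩
  rw [psiF, dif_neg hnr, dif_pos hx2]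
  have hch : Classical.choose hx2 = i := tEnum_inj (Classical.choose_spec hx2)
  rw [dif_neg (by rw [hch]; exact h3)]

lemma psiF_other (hg : ∀ i, g (j i) = j i) {x : Fin M}
    (hx1 : x ∉ Set.range j) (hx2 : x ∉ wSet j g) : psiF j g x = g x := by
  have hnr : ¬ ∃ a : Fin ℓ, j a = x := by
    rintro ⟨a, ha⟩; exact hx1 ⟨a, ha⟩
  have hnt : ¬ ∃ a : Fin (wSet j g).card, tEnum j g a = x := by
    rintro ⟨a, rfl⟩; exact hx2 (tEnum_mem hg a)
  rw [psiF, dif_neg hnr, dif_neg hnt]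

end PsiLemmas

end Main
section Main2

variable {M ℓ : ℕ} [NeZero ℓ]

section PsiMain

variable {j : Fin ℓ → Fin M} {g : Fin M → Fin M}

open Fin.NatCast Fin.CommRing in
lemma psiF_iterate_j (hj : Function.Injective j) (m : ℕ) (i : Fin ℓ) :
    (psiF j g)^[m] (j i) = j (i + (m : Fin ℓ)) := by
  induction m with
  | zero => simp
  | succ m ih =>
      rw [Function.iterate_succ_apply', ih, psiF_j hj]
      congr 1
      push_cast
      ring

lemma mem_per_of_range (hj : Function.Injective j) (i : Fin ℓ) :
    j i ∈ periodicPts (psiF j g) := by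
  refine Function.mk_mem_periodicPts (n := ℓ) (Nat.pos_of_ne_zero (NeZero.ne ℓ)) ?_
  show (psiF j g)^[ℓ] (j i) = j i
  rw [psiF_iterate_j hj, Fin.natCast_self, add_zero]

lemma reach_t (hj : Function.Injective j) (hg : ∀ i, g (j i) = j i) :
    ∀ n : ℕ, ∀ i : Fin (wSet j g).card, (wSet j g).card - (i : ℕ) ≤ n →
      ∃ m, (psiF j g)^[m] (tEnum j g i) = j 0 := by
  intro n
  induction n with
  | zero => intro i hi; have := i.isLt; omega
  | succ n ih =>
      intro i hi
      by_cases h3 : (i : ℕ) + 1 < (wSet j g).card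
      · obtain ⟨m, hm⟩ := ih ⟨(i : ℕ) + 1, h3⟩ (by simp only; omega)
        refine ⟨m + 1, ?_⟩
        rw [Function.iterate_succ_apply, psiF_t hg i h3]
        exact hm
      · exact ⟨1, by rw [Function.iterate_one, psiF_t_last hg i h3]⟩

open Fin.NatCast Fin.CommRing in
lemma reach_j (hj : Function.Injective j) (i : Fin ℓ) :
    ∃ m, (psiF j g)^[m] (j i) = j 0 := by
  refine ⟨ℓ - (i : ℕ), ?_⟩
  rw [psiF_iterate_j hj]
  congr 1
  have key : ((i : ℕ) : Fin ℓ) + ((ℓ - (i : ℕ) : ℕ) : Fin ℓ)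
      = (((i : ℕ) + (ℓ - (i : ℕ)) : ℕ) : Fin ℓ) := (Nat.cast_add _ _).symm
  rw [Fin.cast_val_eq_self] at key
  rw [key, show (i : ℕ) + (ℓ - (i : ℕ)) = ℓ from by have := i.isLt; omega,
    Fin.natCast_self]

lemma reach (hj : Function.Injective j) (hg : ∀ i, g (j i) = j i) (x : Fin M) :
    ∃ m, (psiF j g)^[m] x = j 0 := by
  obtain ⟨n, hn⟩ := exists_iterate_mem_periodicPts g x
  induction n generalizing x with
  | zero =>
      by_cases hr : x ∈ Set.range j
      · obtain ⟨i, rfl⟩ := hr; exact reach_j hj i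
      · have hw : x ∈ wSet j g := mem_wSet.mpr ⟨by simpa using hn, hr⟩
        obtain ⟨i, rfl⟩ := tEnum_surj hg hw
        exact reach_t hj hg (wSet j g).card i (by omega)
  | succ n ih =>
      by_cases hr : x ∈ Set.range j
      · obtain ⟨i, rfl⟩ := hr; exact reach_j hj i
      · by_cases hw : x ∈ wSet j g
        · obtain ⟨i, rfl⟩ := tEnum_surj hg hw
          exact reach_t hj hg (wSet j g).card i (by omega)
        · have hn' : g^[n] (g x) ∈ periodicPts g := by
            rw [← Function.iterate_succ_apply]; exact hn
          obtain ⟨m, hm⟩ := ih (g x) hn'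
          refine ⟨m + 1, ?_⟩
          rw [Function.iterate_succ_apply, psiF_other hg hr hw]
          exact hm

lemma per_psiF (hj : Function.Injective j) (hg : ∀ i, g (j i) = j i) :
    periodicPts (psiF j g) = Set.range j := by
  ext x
  constructor
  · intro hx
    obtain ⟨m, hm⟩ := reach hj hg x
    refine mem_of_periodicPt_of_eventually ?_ hx (m := m) ?_
    · rintro y ⟨i, rfl⟩
      rw [psiF_j hj]
      exact ⟨i + 1, rfl⟩
    · rw [hm]; exact ⟨0, rfl⟩
  · rintro ⟨i, rfl⟩
    exact mem_per_of_range hj i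

lemma conn_psiF (hj : Function.Injective j) (hg : ∀ i, g (j i) = j i) (x y : Fin M) :
    ∃ m n : ℕ, (psiF j g)^[m] x = (psiF j g)^[n] y := by
  obtain ⟨m, hm⟩ := reach hj hg x
  obtain ⟨n, hn⟩ := reach hj hg y
  exact ⟨m, n, by rw [hm, hn]⟩

end PsiMain

lemma perSet_eq (f : Fin M → Fin M) :
    {x : Fin M | ∃ n : ℕ, 1 ≤ n ∧ f^[n] x = x} = periodicPts f := by
  ext x
  simp only [Set.mem_setOf_eq, Function.mem_periodicPts]
  constructor
  · rintro ⟨n, hn, h⟩; exact ⟨n, by omega, h⟩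
  · rintro ⟨n, hn, h⟩; exact ⟨n, by omega, h⟩

end Main2
section Main3

variable {M ℓ : ℕ} [NeZero ℓ]

section PhiMain

variable {f : Fin M → Fin M} {v : Fin M}

lemma zPt_mem : zPt f v ∈ periodicPts f := hitTime_spec f v

lemma ncard_Iio (p : ℕ) : (Set.Iio p).ncard = p := by
  rw [← Finset.coe_range, Set.ncard_coe_finset, Finset.card_range]

lemma minPeriod_z (hconn : ∀ x y : Fin M, ∃ m n : ℕ, f^[m] x = f^[n] y)
    (hcard : (periodicPts f).ncard = ℓ) : minimalPeriod f (zPt f v) = ℓ := by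
  have horb := periodicPts_eq_orbit hconn (zPt_mem (f := f) (v := v))
  rw [horb] at hcard
  rw [Set.ncard_image_of_injOn Function.iterate_injOn_Iio_minimalPeriod] at hcard
  rw [ncard_Iio] at hcard
  exact hcard

lemma phiJ_inj (hconn : ∀ x y : Fin M, ∃ m n : ℕ, f^[m] x = f^[n] y)
    (hcard : (periodicPts f).ncard = ℓ) : Function.Injective (phiJ (ℓ := ℓ) f v) := by
  intro a b hab
  have hp := minPeriod_z (v := v) hconn hcard
  have := Function.iterate_injOn_Iio_minimalPeriod (f := f) (x := zPt f v)
    (by rw [hp]; exact Set.mem_Iio.mpr a.isLt) (by rw [hp]; exact Set.mem_Iio.mpr b.isLt) hab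
  exact Fin.ext this

lemma range_phiJ (hconn : ∀ x y : Fin M, ∃ m n : ℕ, f^[m] x = f^[n] y)
    (hcard : (periodicPts f).ncard = ℓ) :
    Set.range (phiJ (ℓ := ℓ) f v) = periodicPts f := by
  rw [periodicPts_eq_orbit hconn (zPt_mem (f := f) (v := v)), minPeriod_z hconn hcard]
  ext x
  constructor
  · rintro ⟨i, rfl⟩
    exact ⟨(i : ℕ), i.isLt, rfl⟩
  · rintro ⟨a, ha, rfl⟩
    exact ⟨⟨a, ha⟩, rfl⟩

lemma iterate_ell_z (hconn : ∀ x y : Fin M, ∃ m n : ℕ, f^[m] x = f^[n] y)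
    (hcard : (periodicPts f).ncard = ℓ) : f^[ℓ] (zPt f v) = zPt f v := by
  rw [← minPeriod_z (v := v) hconn hcard]
  exact Function.iterate_minimalPeriod

lemma phiG_per {x : Fin M} (hx : x ∈ periodicPts f) : phiG f v x = x := by
  rw [phiG, if_pos hx]

lemma phiG_tail {x : Fin M} (hx : x ∈ tailSet f v) :
    phiG f v x =
      f^[((((tailSet f v).orderIsoOfFin (card_tailSet f v)).symm ⟨x, hx⟩ : Fin (hitTime f v)) : ℕ)] v := by
  rw [phiG, if_neg (tailSet_not_periodic hx), dif_pos hx]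

lemma phiG_other {x : Fin M} (hx1 : x ∉ periodicPts f) (hx2 : x ∉ tailSet f v) :
    phiG f v x = f x := by
  rw [phiG, if_neg hx1, dif_neg hx2]

lemma phiG_maps_tail {x : Fin M} (hx : x ∈ tailSet f v) : phiG f v x ∈ tailSet f v := by
  rw [phiG_tail hx]
  exact mem_tailSet.mpr ⟨_, (((tailSet f v).orderIsoOfFin (card_tailSet f v)).symm ⟨x, hx⟩).isLt, rfl⟩

lemma phiG_injOn_tail : Set.InjOn (phiG f v) ↑(tailSet f v) := by
  intro x hx y hy hxy
  simp only [Finset.mem_coe] at hx hy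
  rw [phiG_tail hx, phiG_tail hy] at hxy
  have h1 := tail_inj f v
    ((((tailSet f v).orderIsoOfFin (card_tailSet f v)).symm ⟨x, hx⟩).isLt)
    ((((tailSet f v).orderIsoOfFin (card_tailSet f v)).symm ⟨y, hy⟩).isLt) hxy
  have h2 : (((tailSet f v).orderIsoOfFin (card_tailSet f v)).symm ⟨x, hx⟩)
      = (((tailSet f v).orderIsoOfFin (card_tailSet f v)).symm ⟨y, hy⟩) := Fin.ext h1
  have h3 := congrArg ((tailSet f v).orderIsoOfFin (card_tailSet f v)) h2
  rw [OrderIso.apply_symm_apply, OrderIso.apply_symm_apply] at h3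
  exact congrArg Subtype.val h3

lemma tail_subset_per_phiG {x : Fin M} (hx : x ∈ tailSet f v) :
    x ∈ periodicPts (phiG f v) := by
  refine mem_periodicPts_of_invariant_injOn (s := ↑(tailSet f v)) ?_ phiG_injOn_tail hx
  intro y hy
  simp only [Finset.mem_coe] at hy ⊢
  exact phiG_maps_tail hy

lemma per_phiG : periodicPts (phiG f v) = periodicPts f ∪ ↑(tailSet f v) := by
  ext x
  constructor
  · intro hx
    have hinv : ∀ y ∈ periodicPts f ∪ ↑(tailSet f v),
        phiG f v y ∈ periodicPts f ∪ ↑(tailSet f v) := by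
      rintro y (hy | hy)
      · left; rw [phiG_per hy]; exact hy
      · right; simp only [Finset.mem_coe] at hy ⊢; exact phiG_maps_tail hy
    have hev : ∃ m, (phiG f v)^[m] x ∈ periodicPts f ∪ ↑(tailSet f v) := by
      obtain ⟨n, hn⟩ := exists_iterate_mem_periodicPts f x
      clear hx
      induction n generalizing x with
      | zero => exact ⟨0, Or.inl (by simpa using hn)⟩
      | succ n ih =>
          by_cases hA : x ∈ periodicPts f ∪ ↑(tailSet f v)
          · exact ⟨0, hA⟩
          · push_cast [Set.mem_union] at hA
            push_neg at hA
            have hstep : phiG f v x = f x := phiG_other hA.1 (by simpa using hA.2)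
            have hn' : f^[n] (f x) ∈ periodicPts f := by
              rw [← Function.iterate_succ_apply]; exact hn
            obtain ⟨m, hm⟩ := ih (f x) hn'
            exact ⟨m + 1, by rw [Function.iterate_succ_apply, hstep]; exact hm⟩
    obtain ⟨m, hm⟩ := hev
    exact mem_of_periodicPt_of_eventually hinv hx hm
  · rintro (hx | hx)
    · exact Function.mk_mem_periodicPts one_pos
        (by show (phiG f v)^[1] x = x; rw [Function.iterate_one, phiG_per hx])
    · exact tail_subset_per_phiG (by simpa using hx)

lemma wSet_phi (hconn : ∀ x y : Fin M, ∃ m n : ℕ, f^[m] x = f^[n] y)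
    (hcard : (periodicPts f).ncard = ℓ) :
    wSet (phiJ (ℓ := ℓ) f v) (phiG f v) = tailSet f v := by
  ext x
  rw [mem_wSet, per_phiG, range_phiJ hconn hcard]
  constructor
  · rintro ⟨hx1 | hx1, hx2⟩
    · exact absurd hx1 hx2
    · simpa using hx1
  · intro hx
    exact ⟨Or.inr (by simpa using hx), tailSet_not_periodic hx⟩

end PhiMain

end Main3
section Main4

variable {M ℓ : ℕ} [NeZero ℓ]

section RT1

variable {f : Fin M → Fin M} {v : Fin M}
  (hconn : ∀ x y : Fin M, ∃ m n : ℕ, f^[m] x = f^[n] y)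
  (hcard : (periodicPts f).ncard = ℓ)

include hconn hcard

lemma hg_phi : ∀ i : Fin ℓ, phiG f v (phiJ (ℓ := ℓ) f v i) = phiJ (ℓ := ℓ) f v i := by
  intro i
  apply phiG_per
  rw [← range_phiJ (v := v) hconn hcard]
  exact ⟨i, rfl⟩

lemma card_wSet_phi : (wSet (phiJ (ℓ := ℓ) f v) (phiG f v)).card = hitTime f v := by
  rw [wSet_phi hconn hcard, card_tailSet]

lemma tEnum_phi (i : Fin (wSet (phiJ (ℓ := ℓ) f v) (phiG f v)).card) :
    tEnum (phiJ (ℓ := ℓ) f v) (phiG f v) i = f^[(i : ℕ)] v ∧ (i : ℕ) < hitTime f v := by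
  have hwmem : wEnum (phiJ (ℓ := ℓ) f v) (phiG f v) i
      ∈ wSet (phiJ (ℓ := ℓ) f v) (phiG f v) := wEnum_mem i
  have htail : wEnum (phiJ (ℓ := ℓ) f v) (phiG f v) i ∈ tailSet f v := by
    rw [wSet_phi hconn hcard] at hwmem; exact hwmem
  refine ⟨?_, ?_⟩
  · show phiG f v (wEnum (phiJ (ℓ := ℓ) f v) (phiG f v) i) = _
    rw [phiG_tail htail]
    congr 1
    have e := orderIsoOfFin_symm_congr (wSet_phi (v := v) hconn hcard) rfl
      (card_tailSet f v) (wEnum_mem i) htail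
    rw [← e]
    have h2 : (⟨wEnum (phiJ (ℓ := ℓ) f v) (phiG f v) i, wEnum_mem i⟩ :
        {x // x ∈ wSet (phiJ (ℓ := ℓ) f v) (phiG f v)})
        = (wSet (phiJ (ℓ := ℓ) f v) (phiG f v)).orderIsoOfFin rfl i := Subtype.ext rfl
    rw [h2, OrderIso.symm_apply_apply]
  · have h3 := i.isLt
    have hcc := card_wSet_phi (v := v) hconn hcard
    omega

lemma roundtrip1_f : psiF (phiJ (ℓ := ℓ) f v) (phiG f v) = f := by
  have hjc : Function.Injective (phiJ (ℓ := ℓ) f v) := phiJ_inj hconn hcard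
  have hgc := hg_phi (v := v) hconn hcard
  funext x
  by_cases hx : x ∈ periodicPts f
  · have hx' : x ∈ Set.range (phiJ (ℓ := ℓ) f v) := by
      rw [range_phiJ hconn hcard]; exact hx
    obtain ⟨i, rfl⟩ := hx'
    rw [psiF_j hjc]
    show phiJ (ℓ := ℓ) f v (i + 1) = f (phiJ (ℓ := ℓ) f v i)
    simp only [phiJ]
    rw [← Function.iterate_succ_apply' f (i : ℕ) (zPt f v)]
    have hmod : ((i + 1 : Fin ℓ) : ℕ) = ((i : ℕ) + 1) % ℓ := by
      rw [Fin.val_add, Fin.val_one']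
      conv_rhs => rw [Nat.add_mod]
      rw [Nat.mod_eq_of_lt i.isLt]
    have hiter := Function.iterate_mod_minimalPeriod_eq (f := f) (x := zPt f v)
      (n := (i : ℕ) + 1)
    rw [minPeriod_z (v := v) hconn hcard] at hiter
    rw [hmod]
    exact hiter
  · by_cases hx2 : x ∈ tailSet f v
    · have hw : x ∈ wSet (phiJ (ℓ := ℓ) f v) (phiG f v) := by
        rw [wSet_phi hconn hcard]; exact hx2
      obtain ⟨i, hi⟩ := tEnum_surj hgc hw
      obtain ⟨hti, hlt⟩ := tEnum_phi (v := v) hconn hcard i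
      rw [← hi]
      by_cases h3 : (i : ℕ) + 1 < (wSet (phiJ (ℓ := ℓ) f v) (phiG f v)).card
      · rw [psiF_t hgc i h3]
        rw [(tEnum_phi (v := v) hconn hcard ⟨(i : ℕ) + 1, h3⟩).1, hti,
          ← Function.iterate_succ_apply' f (i : ℕ) v]
      · rw [psiF_t_last hgc i h3]
        have hcc := card_wSet_phi (v := v) hconn hcard
        have hk : (i : ℕ) + 1 = hitTime f v := by
          have := i.isLt; omega
        rw [hti, ← Function.iterate_succ_apply' f (i : ℕ) v, Nat.succ_eq_add_one, hk]
        show phiJ (ℓ := ℓ) f v 0 = f^[hitTime f v] v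
        simp [phiJ, zPt]
    · rw [psiF_other hgc ?_ ?_]
      · rw [phiG_other hx hx2]
      · rw [range_phiJ hconn hcard]; exact hx
      · rw [wSet_phi hconn hcard]; exact hx2

lemma roundtrip1_v : psiV (phiJ (ℓ := ℓ) f v) (phiG f v) = v := by
  by_cases h : 0 < (wSet (phiJ (ℓ := ℓ) f v) (phiG f v)).card
  · rw [psiV, dif_pos h, (tEnum_phi (v := v) hconn hcard ⟨0, h⟩).1]
    rfl
  · rw [psiV, dif_neg h]
    have hcc := card_wSet_phi (v := v) hconn hcard
    have hk : hitTime f v = 0 := by omega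
    show phiJ (ℓ := ℓ) f v 0 = v
    simp [phiJ, zPt, hk]

end RT1

section RT2

variable {j : Fin ℓ → Fin M} {g : Fin M → Fin M}
  (hj : Function.Injective j) (hg : ∀ i, g (j i) = j i)

include hj hg

lemma iterA : ∀ a (ha : a < (wSet j g).card),
    (psiF j g)^[a] (psiV j g) = tEnum j g ⟨a, ha⟩ := by
  intro a
  induction a with
  | zero =>
      intro ha
      rw [Function.iterate_zero_apply, psiV, dif_pos ha]
  | succ a ih =>
      intro ha
      have ha' : a < (wSet j g).card := by omega
      rw [Function.iterate_succ_apply', ih ha',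
        psiF_t hg ⟨a, ha'⟩ (show ((⟨a, ha'⟩ : Fin _) : ℕ) + 1 < _ from ha)]

lemma iterB : (psiF j g)^[(wSet j g).card] (psiV j g) = j 0 := by
  rcases Nat.eq_zero_or_pos (wSet j g).card with h | h
  · rw [h, Function.iterate_zero_apply, psiV, dif_neg (by omega)]
  · have h1 : (wSet j g).card = ((wSet j g).card - 1) + 1 := by omega
    rw [h1, Function.iterate_succ_apply', iterA hj hg _ (by omega)]
    exact psiF_t_last hg _
      (by show ¬((wSet j g).card - 1 + 1 < (wSet j g).card); omega)

lemma hitTime_psi : hitTime (psiF j g) (psiV j g) = (wSet j g).card := by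
  have hper := per_psiF hj hg
  have le1 : hitTime (psiF j g) (psiV j g) ≤ (wSet j g).card := by
    by_contra hcon
    push_neg at hcon
    exact hitTime_min _ _ hcon (by rw [iterB hj hg, hper]; exact ⟨0, rfl⟩)
  have le2 : ¬ hitTime (psiF j g) (psiV j g) < (wSet j g).card := by
    intro hcon
    have h1 := hitTime_spec (psiF j g) (psiV j g)
    rw [iterA hj hg _ hcon, hper] at h1
    exact (mem_wSet.mp (tEnum_mem hg _)).2 h1
  omega

lemma zPt_psi : zPt (psiF j g) (psiV j g) = j 0 := by
  rw [zPt, hitTime_psi hj hg]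
  exact iterB hj hg

lemma roundtrip2_j : phiJ (ℓ := ℓ) (psiF j g) (psiV j g) = j := by
  funext i
  show (psiF j g)^[(i : ℕ)] (zPt (psiF j g) (psiV j g)) = j i
  rw [zPt_psi hj hg, psiF_iterate_j hj, zero_add, Fin.cast_val_eq_self]

lemma tailSet_psi : tailSet (psiF j g) (psiV j g) = wSet j g := by
  ext x
  rw [mem_tailSet, hitTime_psi hj hg]
  constructor
  · rintro ⟨a, ha, rfl⟩
    rw [iterA hj hg a ha]
    exact tEnum_mem hg _
  · intro hx
    obtain ⟨i, hi⟩ := tEnum_surj hg hx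
    refine ⟨(i : ℕ), i.isLt, ?_⟩
    rw [iterA hj hg _ i.isLt]
    have heta : (⟨(i : ℕ), i.isLt⟩ : Fin (wSet j g).card) = i := Fin.ext rfl
    rw [heta, hi]

lemma roundtrip2_g : phiG (psiF j g) (psiV j g) = g := by
  have hper := per_psiF hj hg
  funext x
  by_cases hx : x ∈ periodicPts (psiF j g)
  · rw [phiG_per hx]
    rw [hper] at hx
    obtain ⟨i, rfl⟩ := hx
    exact (hg i).symm
  · by_cases hx2 : x ∈ tailSet (psiF j g) (psiV j g)
    · rw [phiG_tail hx2]
      have hxw : x ∈ wSet j g := by rw [← tailSet_psi hj hg]; exact hx2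
      have hidx := orderIsoOfFin_symm_congr (tailSet_psi hj hg)
        (card_tailSet (psiF j g) (psiV j g)) rfl hx2 hxw
      rw [hidx]
      rw [iterA hj hg _ (((wSet j g).orderIsoOfFin rfl).symm ⟨x, hxw⟩).isLt]
      have heta : (⟨((((wSet j g).orderIsoOfFin rfl).symm ⟨x, hxw⟩ : Fin _) : ℕ),
          (((wSet j g).orderIsoOfFin rfl).symm ⟨x, hxw⟩).isLt⟩ : Fin (wSet j g).card)
          = ((wSet j g).orderIsoOfFin rfl).symm ⟨x, hxw⟩ := Fin.ext rfl
      rw [heta]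
      show g (wEnum j g (((wSet j g).orderIsoOfFin rfl).symm ⟨x, hxw⟩)) = g x
      congr 1
      show (((wSet j g).orderIsoOfFin rfl) ((((wSet j g).orderIsoOfFin rfl)).symm ⟨x, hxw⟩) :
        Fin M) = x
      rw [OrderIso.apply_symm_apply]
    · rw [phiG_other hx hx2]
      rw [tailSet_psi hj hg] at hx2
      rw [hper] at hx
      exact psiF_other hg hx hx2

end RT2

lemma ncard_range_j {j : Fin ℓ → Fin M} (hj : Function.Injective j) :
    (Set.range j).ncard = ℓ := by
  rw [← Nat.card_coe_set_eq, Nat.card_range_of_injective hj]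
  simp

end Main4
section Count

variable (M ℓ : ℕ) [NeZero ℓ]

def SSet : Set (Fin M → Fin M) :=
  {f | (∀ x y : Fin M, ∃ m n : ℕ, f^[m] x = f^[n] y) ∧
    Set.ncard {x : Fin M | ∃ n : ℕ, 1 ≤ n ∧ f^[n] x = x} = ℓ}

def TSet : Set ((Fin ℓ → Fin M) × (Fin M → Fin M)) :=
  {p | Function.Injective p.1 ∧ ∀ i, p.2 (p.1 i) = p.1 i}

lemma mem_SSet_iff {f : Fin M → Fin M} :
    f ∈ SSet M ℓ ↔ (∀ x y : Fin M, ∃ m n : ℕ, f^[m] x = f^[n] y) ∧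
      (periodicPts f).ncard = ℓ := by
  rw [SSet, Set.mem_setOf_eq, perSet_eq]

noncomputable def mainEquiv : (SSet M ℓ × Fin M) ≃ TSet M ℓ where
  toFun := fun p =>
    ⟨(phiJ (ℓ := ℓ) p.1.1 p.2, phiG p.1.1 p.2),
      ⟨phiJ_inj ((mem_SSet_iff M ℓ).mp p.1.2).1 ((mem_SSet_iff M ℓ).mp p.1.2).2,
        hg_phi ((mem_SSet_iff M ℓ).mp p.1.2).1 ((mem_SSet_iff M ℓ).mp p.1.2).2⟩⟩
  invFun := fun q =>
    (⟨psiF q.1.1 q.1.2,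
      (mem_SSet_iff M ℓ).mpr
        ⟨conn_psiF q.2.1 q.2.2, by rw [per_psiF q.2.1 q.2.2]; exact ncard_range_j q.2.1⟩⟩,
      psiV q.1.1 q.1.2)
  left_inv := by
    rintro ⟨⟨f, hf⟩, v⟩
    have hconn := ((mem_SSet_iff M ℓ).mp hf).1
    have hcard := ((mem_SSet_iff M ℓ).mp hf).2
    refine Prod.ext (Subtype.ext ?_) ?_
    · exact roundtrip1_f hconn hcard
    · exact roundtrip1_v hconn hcard
  right_inv := by
    rintro ⟨⟨j, g⟩, hp⟩
    apply Subtype.ext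
    exact Prod.ext (roundtrip2_j hp.1 hp.2) (roundtrip2_g hp.1 hp.2)

open Classical in
noncomputable def fixEquiv (j : Fin ℓ ↪ Fin M) :
    {g : Fin M → Fin M // ∀ i, g (j i) = j i} ≃ ({x : Fin M // x ∉ Set.range j} → Fin M) where
  toFun := fun g x => g.1 x.1
  invFun := fun h =>
    ⟨fun x => if hx : x ∈ Set.range j then x else h ⟨x, hx⟩,
      fun i => dif_pos ⟨i, rfl⟩⟩
  left_inv := by
    rintro ⟨g, hg⟩
    apply Subtype.ext
    funext x
    by_cases hx : x ∈ Set.range ⇑j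
    · obtain ⟨i, rfl⟩ := hx
      simp only
      rw [dif_pos ⟨i, rfl⟩, hg i]
    · simp only
      rw [dif_neg hx]
  right_inv := by
    intro h
    funext x
    simp only
    rw [dif_neg x.2]

noncomputable def tEquiv : TSet M ℓ ≃ Σ j : Fin ℓ ↪ Fin M, {g : Fin M → Fin M // ∀ i, g (j i) = j i} where
  toFun := fun p => ⟨⟨p.1.1, p.2.1⟩, ⟨p.1.2, p.2.2⟩⟩
  invFun := fun q => ⟨(q.1, q.2.1), ⟨q.1.injective, q.2.2⟩⟩
  left_inv := by rintro ⟨⟨j, g⟩, hp⟩; rfl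
  right_inv := by rintro ⟨j, g⟩; rfl

open Classical in
lemma card_compl_range (hℓM : ℓ ≤ M) (j : Fin ℓ ↪ Fin M) :
    Fintype.card {x : Fin M // x ∉ Set.range j} = M - ℓ := by
  have h1 : Fintype.card {x : Fin M // x ∈ Set.range ⇑j} = ℓ := by
    rw [Fintype.card_congr (Equiv.ofInjective ⇑j j.injective).symm, Fintype.card_fin]
  rw [Fintype.card_subtype_compl, Fintype.card_fin, h1]

open Classical in
noncomputable def tEquiv2 (hℓM : ℓ ≤ M) :
    TSet M ℓ ≃ (Fin ℓ ↪ Fin M) × (Fin (M - ℓ) → Fin M) :=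
  ((tEquiv M ℓ).trans
    (Equiv.sigmaCongrRight fun j =>
      (fixEquiv M ℓ j).trans
        (Equiv.arrowCongr
          (Fintype.equivFinOfCardEq (card_compl_range M ℓ hℓM j)) (Equiv.refl _)))).trans
    (Equiv.sigmaEquivProd _ _)

lemma card_T (hℓM : ℓ ≤ M) :
    Nat.card (TSet M ℓ) = M.descFactorial ℓ * M ^ (M - ℓ) := by
  classical
  rw [Nat.card_congr (tEquiv2 M ℓ hℓM), Nat.card_prod, Nat.card_eq_fintype_card,
    Nat.card_eq_fintype_card, Fintype.card_embedding_eq, Fintype.card_fun,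
    Fintype.card_fin, Fintype.card_fin, Fintype.card_fin]

lemma card_S_mul (hℓM : ℓ ≤ M) :
    Nat.card (SSet M ℓ) * M = M.descFactorial ℓ * M ^ (M - ℓ) := by
  have h1 : Nat.card (SSet M ℓ × Fin M) = Nat.card (TSet M ℓ) :=
    Nat.card_congr (mainEquiv M ℓ)
  rw [Nat.card_prod] at h1
  simp only [Nat.card_eq_fintype_card, Fintype.card_fin] at h1
  rw [← card_T M ℓ hℓM, ← h1]

end Count
end Stmt3Aux

/-- For a uniformly random `f : Fin M → Fin M`, the probability that the
functional graph is connected and `f` has exactly `ℓ` periodic points equals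
`M! / ((M-ℓ)! * M^(ℓ+1))`. -/
theorem stmt3 (M ℓ : ℕ) (hM : 1 ≤ M) (hℓ : 1 ≤ ℓ) (hℓM : ℓ ≤ M) :
    (Set.ncard {f : Fin M → Fin M |
        (∀ x y : Fin M, ∃ m n : ℕ, f^[m] x = f^[n] y) ∧
        Set.ncard {x : Fin M | ∃ n : ℕ, 1 ≤ n ∧ f^[n] x = x} = ℓ} : ℝ)
        / (M : ℝ) ^ M
      = (Nat.factorial M : ℝ) /
          ((Nat.factorial (M - ℓ) : ℝ) * (M : ℝ) ^ (ℓ + 1)) := by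
  haveI : NeZero ℓ := ⟨by omega⟩
  have key := Stmt3Aux.card_S_mul M ℓ hℓM
  have hset : {f : Fin M → Fin M |
      (∀ x y : Fin M, ∃ m n : ℕ, f^[m] x = f^[n] y) ∧
      Set.ncard {x : Fin M | ∃ n : ℕ, 1 ≤ n ∧ f^[n] x = x} = ℓ}.ncard
      = Nat.card (Stmt3Aux.SSet M ℓ) := (Nat.card_coe_set_eq _).symm
  rw [hset]
  set a := Nat.card (Stmt3Aux.SSet M ℓ) with ha
  have hM0 : (M : ℝ) ≠ 0 := by positivity
  have hMpowM : (M : ℝ) ^ M ≠ 0 := by positivity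
  have hMpowl : (M : ℝ) ^ (ℓ + 1) ≠ 0 := by positivity
  have hfac : ((M - ℓ).factorial : ℝ) ≠ 0 := by
    exact_mod_cast Nat.factorial_ne_zero (M - ℓ)
  rw [div_eq_div_iff hMpowM (by positivity)]
  have keyR : (a : ℝ) * (M : ℝ) = (M.descFactorial ℓ : ℝ) * (M : ℝ) ^ (M - ℓ) := by
    exact_mod_cast key
  have hfactR : ((M - ℓ).factorial : ℝ) * (M.descFactorial ℓ : ℝ) = (M.factorial : ℝ) := by
    exact_mod_cast Nat.factorial_mul_descFactorial hℓM
  have hpow : (M : ℝ) ^ (M - ℓ) * (M : ℝ) ^ ℓ = (M : ℝ) ^ M := by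
    rw [← pow_add]
    congr 1
    omega
  calc (a : ℝ) * ((M - ℓ).factorial * (M : ℝ) ^ (ℓ + 1))
      = ((a : ℝ) * M) * ((M - ℓ).factorial * (M : ℝ) ^ ℓ) := by rw [pow_succ]; ring
    _ = ((M.descFactorial ℓ : ℝ) * (M : ℝ) ^ (M - ℓ)) * ((M - ℓ).factorial * (M : ℝ) ^ ℓ) := by
        rw [keyR]
    _ = (((M - ℓ).factorial : ℝ) * (M.descFactorial ℓ : ℝ)) * ((M : ℝ) ^ (M - ℓ) * (M : ℝ) ^ ℓ) := by
        ring
    _ = (M.factorial : ℝ) * (M : ℝ) ^ M := by rw [hfactR, hpow]
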